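/- For all nonnegative integers $v$ and all $0 \le j \le v$, one has $\binom{v+1/2}{v-j}\binom{v-1/2}{j} = 2^{-2v}\binom{2v}{v}\binom{2v+1}{2j+1}$. -/

import Mathlib

/-- The generalized binomial coefficient `x(x-1)⋯(x-m+1)/m!` for real `x`. -/
noncomputable def rchoose (x : ℝ) (m : ℕ) : ℝ :=
  (∏ i ∈ Finset.range m, (x - i)) / (m.factorial : ℝ)

open Finset in
private lemma L1aux (v : ℕ) : ∀ k, k ≤ v →
    (∏ i ∈ range k, ((v:ℝ) + 1/2 - i)) * 2^(2*k) * (v.factorial : ℝ)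
      * ((2*(v-k)+1).factorial : ℝ)
    = ((2*v+1).factorial : ℝ) * ((v-k).factorial : ℝ) := by
  intro k
  induction k with
  | zero => intro _; simp [mul_comm]
  | succ k ih =>
    intro hk
    obtain ⟨m, hm⟩ : ∃ m, v - k = m + 1 := ⟨v - (k+1), by omega⟩
    have h1 : v - (k+1) = m := by omega
    have hvk : ((v:ℝ)) + 1/2 - k = (m:ℝ) + 3/2 := by
      have hv : v = m + 1 + k := by omega
      have : (v:ℝ) = (m:ℝ) + 1 + k := by exact_mod_cast congrArg Nat.cast hv
      rw [this]; ring
    have IH := ih (by omega)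
    rw [hm] at IH
    rw [prod_range_succ, h1, hvk]
    have e2 : 2*(m+1)+1 = (2*m+1)+1+1 := by ring
    rw [e2, Nat.factorial_succ ((2*m+1)+1), Nat.factorial_succ (2*m+1),
      Nat.factorial_succ m] at IH
    push_cast at IH ⊢
    have hm1 : ((m:ℝ) + 1) ≠ 0 := by positivity
    apply mul_left_cancel₀ hm1
    linear_combination IH

open Finset in
private lemma L2aux (v : ℕ) : ∀ k, k ≤ v →
    (∏ i ∈ range k, ((v:ℝ) - 1/2 - i)) * 2^(2*k) * (v.factorial : ℝ)
      * ((2*(v-k)).factorial : ℝ)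
    = ((2*v).factorial : ℝ) * ((v-k).factorial : ℝ) := by
  intro k
  induction k with
  | zero => intro _; simp [mul_comm]
  | succ k ih =>
    intro hk
    obtain ⟨m, hm⟩ : ∃ m, v - k = m + 1 := ⟨v - (k+1), by omega⟩
    have h1 : v - (k+1) = m := by omega
    have hvk : ((v:ℝ)) - 1/2 - k = (m:ℝ) + 1/2 := by
      have hv : v = m + 1 + k := by omega
      have : (v:ℝ) = (m:ℝ) + 1 + k := by exact_mod_cast congrArg Nat.cast hv
      rw [this]; ring
    have IH := ih (by omega)
    rw [hm] at IH
    rw [prod_range_succ, h1, hvk]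
    have e2 : 2*(m+1) = (2*m)+1+1 := by ring
    rw [e2, Nat.factorial_succ ((2*m)+1), Nat.factorial_succ (2*m),
      Nat.factorial_succ m] at IH
    push_cast at IH ⊢
    have hm1 : ((m:ℝ) + 1) ≠ 0 := by positivity
    apply mul_left_cancel₀ hm1
    linear_combination IH

theorem binomial_identity (v : ℕ) (j : ℕ) (hj : j ≤ v) :
    rchoose ((v : ℝ) + 1/2) (v - j) * rchoose ((v : ℝ) - 1/2) j =
      2 ^ (-(2 * v : ℤ)) * ((2 * v).choose v : ℝ) * ((2 * v + 1).choose (2 * j + 1) : ℝ) := by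
  obtain ⟨a, rfl⟩ : ∃ a, v = j + a := ⟨v - j, by omega⟩
  have ha : j + a - j = a := by omega
  have ha2 : j + a - a = j := by omega
  have h1 := L1aux (j+a) a (by omega)
  have h2 := L2aux (j+a) j (by omega)
  rw [ha2] at h1
  rw [ha] at h2
  have c1' := Nat.choose_mul_factorial_mul_factorial (show j+a ≤ 2*(j+a) by omega)
  rw [show 2*(j+a) - (j+a) = j+a by omega] at c1'
  have c1 : (((2*(j+a)).choose (j+a) : ℝ)) * ((j+a).factorial : ℝ) * ((j+a).factorial : ℝ)
      = ((2*(j+a)).factorial : ℝ) := by exact_mod_cast congrArg Nat.cast c1'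
  have c2' := Nat.choose_mul_factorial_mul_factorial (show 2*j+1 ≤ 2*(j+a)+1 by omega)
  rw [show 2*(j+a)+1 - (2*j+1) = 2*a by omega] at c2'
  have c2 : (((2*(j+a)+1).choose (2*j+1) : ℝ)) * ((2*j+1).factorial : ℝ) * ((2*a).factorial : ℝ)
      = ((2*(j+a)+1).factorial : ℝ) := by exact_mod_cast congrArg Nat.cast c2'
  have A0 : ((j+a).factorial : ℝ) ≠ 0 := by positivity
  have A1 : ((2*j+1).factorial : ℝ) ≠ 0 := by positivity
  have A2 : ((2*a).factorial : ℝ) ≠ 0 := by positivity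
  have A3 : (j.factorial : ℝ) ≠ 0 := by positivity
  have A4 : (a.factorial : ℝ) ≠ 0 := by positivity
  have hP : (∏ i ∈ Finset.range a, (((j+a:ℕ):ℝ) + 1/2 - i))
      = (((2*(j+a)+1).factorial : ℝ) * (j.factorial : ℝ))
        / (2^(2*a) * ((j+a).factorial : ℝ) * ((2*j+1).factorial : ℝ)) := by
    rw [eq_div_iff (by positivity)]
    linear_combination h1
  have hQ : (∏ i ∈ Finset.range j, (((j+a:ℕ):ℝ) - 1/2 - i))
      = (((2*(j+a)).factorial : ℝ) * (a.factorial : ℝ))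
        / (2^(2*j) * ((j+a).factorial : ℝ) * ((2*a).factorial : ℝ)) := by
    rw [eq_div_iff (by positivity)]
    linear_combination h2
  have hC1 : (((2*(j+a)).choose (j+a) : ℝ))
      = ((2*(j+a)).factorial : ℝ) / (((j+a).factorial : ℝ) * ((j+a).factorial : ℝ)) := by
    rw [eq_div_iff (by positivity)]
    linear_combination c1
  have hC2 : (((2*(j+a)+1).choose (2*j+1) : ℝ))
      = ((2*(j+a)+1).factorial : ℝ) / (((2*j+1).factorial : ℝ) * ((2*a).factorial : ℝ)) := by
    rw [eq_div_iff (by positivity)]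
    linear_combination c2
  have hz : (2:ℝ) ^ (-(2 * ((j+a:ℕ)) : ℤ)) = ((2:ℝ)^(2*(j+a)))⁻¹ := by
    rw [show (-(2 * ((j+a:ℕ)) : ℤ)) = -((2*(j+a):ℕ):ℤ) by push_cast; ring,
      zpow_neg, zpow_natCast]
  rw [rchoose, rchoose, ha, hP, hQ, hC1, hC2, hz]
  have B0 : ((2*(j+a)+1).factorial : ℝ) ≠ 0 := by positivity
  have B1 : ((2*(j+a)).factorial : ℝ) ≠ 0 := by positivity
  field_simp
  ring
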